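/- Let q be a power of a prime p, let s be a prime and t ≥ 2 an integer, and suppose (q^{s^t} − 1)/(q − 1) is a power of a prime r. Then q^{s^t} − 1 has no primitive prime divisor; consequently, by Zsigmondy's theorem, either q = 2 and s^t = 6, or s^t = 2 and q is a Mersenne prime — and since t ≥ 2 and s is prime, both alternatives are impossible. Hence (q^{s^t} − 1)/(q − 1) is never a prime power when t ≥ 2. -/

import Mathlib

open SimpleGraph

/-- Vertex type of the bipartite divisor graph of a set of naturals:
the disjoint union of `X` and of the primes dividing some element of `X`. -/
abbrev BDGVert (X : Set ℕ) : Type :=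
  {x : ℕ // x ∈ X} ⊕ {p : ℕ // p.Prime ∧ ∃ x ∈ X, p ∣ x}

/-- The bipartite divisor graph `B(X)`: a prime `p` is adjacent to `x ∈ X` iff `p ∣ x`. -/
def bdg (X : Set ℕ) : SimpleGraph (BDGVert X) :=
  SimpleGraph.fromRel (fun a b =>
    match a, b with
    | Sum.inr p, Sum.inl x => p.1 ∣ x.1
    | _, _ => False)

/-- The prime graph `Δ(X)`: primes `p ≠ q` are adjacent iff `pq` divides some element of `X`. -/
def primeGraph (X : Set ℕ) : SimpleGraph {p : ℕ // p.Prime ∧ ∃ x ∈ X, p ∣ x} :=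
  SimpleGraph.fromRel (fun p q => ∃ x ∈ X, p.1 * q.1 ∣ x)

/-- The common divisor graph `Γ(X)`: distinct `x, y ∈ X` are adjacent iff `gcd(x,y) ≠ 1`. -/
def cdGraph (X : Set ℕ) : SimpleGraph {x : ℕ // x ∈ X} :=
  SimpleGraph.fromRel (fun a b => Nat.gcd a.1 b.1 ≠ 1)

/-- The set of irreducible complex character degrees of a group `G`. -/
def charDegrees (G : Type) [Group G] : Set ℕ :=
  {n | ∃ V : FDRep ℂ G, CategoryTheory.Simple V ∧ Module.finrank ℂ V = n}

/-- Disjoint union of two simple graphs. -/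
def disjUnionGraph {α β : Type*} (G : SimpleGraph α) (H : SimpleGraph β) :
    SimpleGraph (α ⊕ β) where
  Adj a b :=
    match a, b with
    | Sum.inl x, Sum.inl y => G.Adj x y
    | Sum.inr x, Sum.inr y => H.Adj x y
    | _, _ => False
  symm := by
    constructor; rintro (x | x) (y | y) h <;> simp_all <;> exact h.symm
  loopless := by
    constructor; rintro (x | x) h <;> simp_all


lemma geomS (q : ℕ) (hq : 1 ≤ q) (n : ℕ) :
    (∑ i ∈ Finset.range n, q ^ i) * (q - 1) = q ^ n - 1 := by
  have h1 : 1 ≤ q ^ n := Nat.one_le_pow _ _ hq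
  zify [hq, h1]
  exact geom_sum_mul _ _

lemma geomS_split (q m k : ℕ) (hq : 2 ≤ q) :
    ∑ i ∈ Finset.range (m * k), q ^ i =
      (∑ j ∈ Finset.range k, (q ^ m) ^ j) * (∑ i ∈ Finset.range m, q ^ i) := by
  have hq1 : 1 ≤ q := by omega
  have hqm : 1 ≤ q ^ m := Nat.one_le_pow _ _ hq1
  apply Nat.eq_of_mul_eq_mul_right (show 0 < q - 1 by omega)
  rw [geomS q hq1, mul_assoc, geomS q hq1, geomS (q ^ m) hqm, ← pow_mul]

lemma pow_of_sq_zero {R : Type*} [CommRing R] (u : R) (hu : u * u = 0) :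
    ∀ j : ℕ, (1 + u) ^ j = 1 + (j : R) * u := by
  intro j
  induction j with
  | zero => simp
  | succ n ih =>
    have h : (1 + u) ^ (n + 1) = 1 + ((n : R) + 1) * u + (n : R) * (u * u) := by
      rw [pow_succ, ih]; ring
    rw [h, hu, mul_zero, add_zero]
    push_cast
    ring

lemma not_sq_dvd (s δ : ℕ) (hs2 : 2 ≤ s)
    (hdvd : s ^ 2 ∣ (∑ j ∈ Finset.range s, j) * δ) (hsd : s ∣ δ) :
    ¬ s ^ 2 ∣ ∑ j ∈ Finset.range s, (δ + 1) ^ j := by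
  intro hcon
  rw [← ZMod.natCast_eq_zero_iff] at hcon
  push_cast at hcon
  set u : ZMod (s ^ 2) := (δ : ZMod (s ^ 2)) with hu
  have huu : u * u = 0 := by
    rw [hu, ← Nat.cast_mul, ZMod.natCast_eq_zero_iff]
    calc s ^ 2 = s * s := sq s
    _ ∣ δ * δ := mul_dvd_mul hsd hsd
  have hsum : ∑ j ∈ Finset.range s, ((δ : ZMod (s ^ 2)) + 1) ^ j = (s : ZMod (s ^ 2)) := by
    have : ∀ j ∈ Finset.range s, ((δ : ZMod (s ^ 2)) + 1) ^ j = 1 + (j : ZMod (s ^ 2)) * u := by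
      intro j _
      rw [add_comm]
      exact pow_of_sq_zero u huu j
    rw [Finset.sum_congr rfl this, Finset.sum_add_distrib, Finset.sum_const,
      Finset.card_range, ← Finset.sum_mul]
    have h0 : (∑ j ∈ Finset.range s, (j : ZMod (s ^ 2))) * u = 0 := by
      rw [hu, ← Nat.cast_sum, ← Nat.cast_mul, ZMod.natCast_eq_zero_iff]
      exact hdvd
    rw [h0, add_zero, nsmul_eq_mul, mul_one]
  rw [hsum] at hcon
  rw [ZMod.natCast_eq_zero_iff] at hcon
  have := Nat.le_of_dvd (by omega) hcon
  nlinarith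

lemma key (q s t r ℓ : ℕ) (hq : 2 ≤ q) (hs : s.Prime) (ht : 2 ≤ t) (hr : r.Prime)
    (h : (∑ i ∈ Finset.range (s ^ t), q ^ i) = r ^ ℓ) : False := by
  have hs2 := hs.two_le
  set m := s ^ (t - 1) with hm
  have hnm : s ^ t = m * s := by
    rw [hm, ← pow_succ]
    congr 1
    omega
  have hm2 : 2 ≤ m := le_trans hs2 (Nat.le_self_pow (by omega) s)
  have hq1 : 1 ≤ q := by omega
  have hQ2 : 2 ≤ q ^ m := le_trans hq (Nat.le_self_pow (by omega) q)
  set A := ∑ i ∈ Finset.range m, q ^ i with hA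
  set B := ∑ j ∈ Finset.range s, (q ^ m) ^ j with hB
  have hsplit : B * A = r ^ ℓ := by
    rw [hB, hA, ← geomS_split q m s hq, ← hnm]
    exact h
  have hA3 : 1 + q ≤ A := by
    have hsub : Finset.range 2 ⊆ Finset.range m := Finset.range_subset_range.mpr hm2
    calc 1 + q = ∑ i ∈ Finset.range 2, q ^ i := by simp [Finset.sum_range_succ]
    _ ≤ A := Finset.sum_le_sum_of_subset hsub
  have hBbig : s < B := by
    have h1 : (q ^ m) ^ (s - 1) ≤ B :=
      Finset.single_le_sum (f := fun j => (q ^ m) ^ j) (fun i _ => Nat.zero_le _)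
        (Finset.mem_range.mpr (by omega))
    have h2 : 2 ^ s ≤ (q ^ m) ^ (s - 1) := by
      have hms : s ≤ m * (s - 1) := by
        calc s ≤ 2 * (s - 1) := by omega
        _ ≤ m * (s - 1) := Nat.mul_le_mul_right _ hm2
      calc 2 ^ s ≤ 2 ^ (m * (s - 1)) := Nat.pow_le_pow_right (by omega) hms
      _ = (2 ^ m) ^ (s - 1) := by rw [pow_mul]
      _ ≤ (q ^ m) ^ (s - 1) := Nat.pow_le_pow_left (Nat.pow_le_pow_left hq m) _
    have := (Nat.lt_two_pow_self (n := s))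
    omega
  have hAd : A ∣ r ^ ℓ := ⟨B, by rw [← hsplit]; ring⟩
  have hBd : B ∣ r ^ ℓ := ⟨A, hsplit.symm⟩
  obtain ⟨a, _, hAa⟩ := (Nat.dvd_prime_pow hr).mp hAd
  obtain ⟨b, _, hBb⟩ := (Nat.dvd_prime_pow hr).mp hBd
  have ha0 : a ≠ 0 := by rintro rfl; simp at hAa; omega
  have hb0 : b ≠ 0 := by rintro rfl; simp at hBb; omega
  have rA : r ∣ A := hAa ▸ dvd_pow_self r ha0
  have rB : r ∣ B := hBb ▸ dvd_pow_self r hb0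
  have rδ : r ∣ q ^ m - 1 := by
    refine dvd_trans rA ⟨q - 1, ?_⟩
    rw [← geomS q hq1 m]
  have hrs : r = s := by
    have h0 : ((B : ℕ) : ZMod r) = 0 := (ZMod.natCast_eq_zero_iff _ _).mpr rB
    have hQ : (q : ZMod r) ^ m = 1 := by
      have he : (q : ZMod r) ^ m = ((q ^ m : ℕ) : ZMod r) := by push_cast; ring
      rw [he, show (q ^ m : ℕ) = (q ^ m - 1) + 1 from by omega]
      push_cast
      rw [show ((q ^ m - 1 : ℕ) : ZMod r) = 0 from
        (ZMod.natCast_eq_zero_iff _ _).mpr rδ]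
      simp
    have hBs : ((B : ℕ) : ZMod r) = (s : ZMod r) := by
      rw [hB]
      push_cast
      rw [hQ]
      simp
    rw [hBs, ZMod.natCast_eq_zero_iff] at h0
    exact (Nat.prime_dvd_prime_iff_eq hr hs).mp h0
  subst hrs
  obtain ⟨c, hc⟩ := rδ
  have hTδ : r ^ 2 ∣ (∑ j ∈ Finset.range r, j) * (q ^ m - 1) := by
    rcases Nat.Prime.eq_two_or_odd' hs with h2 | hodd
    · subst h2
      have hT : (∑ j ∈ Finset.range 2, j) = 1 := by decide
      rw [hT, one_mul]
      have hqodd : Odd q := by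
        rcases Nat.even_or_odd q with he | ho
        · exfalso
          obtain ⟨x, hx⟩ := (Nat.even_pow (m := q) (n := m)).mpr ⟨he, by omega⟩
          omega
        · exact ho
      obtain ⟨m2, hm2'⟩ : ∃ m2, m = 2 * m2 := by
        have : (2 : ℕ) ∣ m := hm ▸ dvd_pow_self 2 (by omega)
        exact this
      obtain ⟨k, hk⟩ := hqodd.pow (n := m2)
      have hQeq : q ^ m = 4 * (k * k + k) + 1 := by
        rw [show m = m2 * 2 by omega, pow_mul, hk]
        ring
      omega
    · obtain ⟨w, hw⟩ := hodd
      have hT2 : (∑ j ∈ Finset.range r, j) * 2 = (r * w) * 2 := by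
        rw [Finset.sum_range_id_mul_two, show r - 1 = 2 * w from by omega]
        ring
      have hT : (∑ j ∈ Finset.range r, j) = r * w := by omega
      rw [hT, hc]
      exact ⟨w * c, by ring⟩
  have hnot : ¬ r ^ 2 ∣ B := by
    have heq : B = ∑ j ∈ Finset.range r, ((q ^ m - 1) + 1) ^ j := by
      rw [hB]
      refine Finset.sum_congr rfl fun j _ => ?_
      rw [show q ^ m - 1 + 1 = q ^ m from by omega]
    rw [heq]
    exact not_sq_dvd r (q ^ m - 1) hs2 hTδ ⟨c, hc⟩
  have hb1 : b = 1 := by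
    by_contra hb1
    exact hnot (hBb ▸ pow_dvd_pow r (by omega))
  rw [hb1, pow_one] at hBb
  omega

theorem stmt4 (q s t : ℕ) (hq : IsPrimePow q) (hs : s.Prime) (ht : 2 ≤ t) :
    (∀ r : ℕ, r.Prime → (∃ ℓ : ℕ, (q ^ s ^ t - 1) / (q - 1) = r ^ ℓ) →
      ¬ ∃ z : ℕ, z.Prime ∧ z ∣ q ^ s ^ t - 1 ∧
        ∀ i : ℕ, 1 ≤ i → i < s ^ t → ¬ z ∣ q ^ i - 1) ∧
    (∀ r : ℕ, r.Prime → ∀ ℓ : ℕ, (q ^ s ^ t - 1) / (q - 1) ≠ r ^ ℓ) := by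

  have hq2 : 2 ≤ q := hq.two_le
  have hdiv : (q ^ s ^ t - 1) / (q - 1) = ∑ i ∈ Finset.range (s ^ t), q ^ i := by
    rw [← geomS q (by omega) (s ^ t)]
    exact Nat.mul_div_cancel _ (by omega)
  have h2 : ∀ r : ℕ, r.Prime → ∀ ℓ : ℕ, (q ^ s ^ t - 1) / (q - 1) ≠ r ^ ℓ := by
    intro r hr ℓ hcon
    rw [hdiv] at hcon
    exact key q s t r ℓ hq2 hs ht hr hcon
  refine ⟨?_, h2⟩
  rintro r hr ⟨ℓ, hl⟩ _
  exact h2 r hr ℓ hl
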